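/- Let C ≥ 0 be a real number and let s : ℝ → ℝ be a function with s(x) ≥ 0 for all x. Suppose that s(x) ≤ C for all real x with 1 < x ≤ 16, and that s(x) ≤ s(x^(2/3)) + C·(ln x)·ln(ln x) for all real x > 16. Then s(x) ≤ C + 3·C·(ln x)·ln(ln x) for all real x > 16. -/

import Mathlib

theorem stmt_1 (C : ℝ) (hC : 0 ≤ C) (s : ℝ → ℝ)
    (hs_nonneg : ∀ x : ℝ, 0 ≤ s x)
    (hbase : ∀ x : ℝ, 1 < x → x ≤ 16 → s x ≤ C)
    (hrec : ∀ x : ℝ, 16 < x →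
      s x ≤ s (x ^ ((2 : ℝ) / 3)) + C * Real.log x * Real.log (Real.log x)) :
    ∀ x : ℝ, 16 < x → s x ≤ C + 3 * C * Real.log x * Real.log (Real.log x) := by
  have h16 : (0:ℝ) < 16 := by norm_num
  have hlog16 : 1 < Real.log 16 := by
    rw [← Real.exp_lt_exp, Real.exp_log h16]
    have := Real.exp_one_lt_d9
    linarith
  have key : ∀ n : ℕ, ∀ x : ℝ, 16 < x → Real.log x ≤ Real.log 16 * (3/2)^n →
      s x ≤ C + 3 * C * Real.log x * Real.log (Real.log x) := by
    intro n
    induction n with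
    | zero =>
      intro x hx hle
      exfalso
      have := Real.log_lt_log h16 hx
      simp at hle
      linarith
    | succ n ih =>
      intro x hx hle
      have hx0 : (0:ℝ) < x := lt_trans h16 hx
      set y := x ^ ((2:ℝ)/3) with hy_def
      have hlogy : Real.log y = (2/3) * Real.log x := Real.log_rpow hx0 _
      have hlogx : Real.log 16 < Real.log x := Real.log_lt_log h16 hx
      have hlogx1 : 1 < Real.log x := by linarith
      have hllx : 0 < Real.log (Real.log x) := Real.log_pos hlogx1
      have hrecx := hrec x hx
      by_cases hy : 16 < y
      · have hy16 : Real.log y ≤ Real.log 16 * (3/2)^n := by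
          rw [hlogy]
          rw [pow_succ] at hle
          nlinarith
        have ihy := ih y hy hy16
        have hlogy1 : 1 < Real.log y := by
          have := Real.log_lt_log h16 hy; linarith
        have hlylx : Real.log y ≤ Real.log x := by rw [hlogy]; nlinarith
        have hlly : Real.log (Real.log y) ≤ Real.log (Real.log x) := by
          apply Real.log_le_log (by linarith) hlylx
        have hprod : Real.log y * Real.log (Real.log y) ≤
            Real.log y * Real.log (Real.log x) :=
          mul_le_mul_of_nonneg_left hlly (by linarith)
        have h2 : 3*C*(Real.log y * Real.log (Real.log y)) ≤
            3*C*(Real.log y * Real.log (Real.log x)) :=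
          mul_le_mul_of_nonneg_left hprod (by linarith)
        have h3 : 3*C*(Real.log y * Real.log (Real.log x)) =
            2*C*(Real.log x * Real.log (Real.log x)) := by rw [hlogy]; ring
        have h4 : 0 ≤ C * (Real.log x * Real.log (Real.log x)) :=
          mul_nonneg hC (mul_nonneg (by linarith) (le_of_lt hllx))
        linarith
      · push_neg at hy
        have hy0 : (0:ℝ) < y := Real.rpow_pos_of_pos hx0 _
        have hy1 : 1 < y := by
          have hl : 0 < Real.log y := by rw [hlogy]; nlinarith
          exact (Real.log_pos_iff hy0.le).mp hl
        have hsy := hbase y hy1 hy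
        have h4 : 0 ≤ C * (Real.log x * Real.log (Real.log x)) :=
          mul_nonneg hC (mul_nonneg (by linarith) (le_of_lt hllx))
        linarith
  intro x hx
  have hlogx : Real.log 16 < Real.log x := Real.log_lt_log h16 hx
  obtain ⟨n, hn⟩ := pow_unbounded_of_one_lt (Real.log x / Real.log 16)
    (by norm_num : (1:ℝ) < 3/2)
  apply key n x hx
  have h16p : 0 < Real.log 16 := by linarith
  rw [div_lt_iff₀ h16p] at hn
  nlinarith
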